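/- There exist universal constants C₀ > 0 (sufficiently small) and c > 0 such that the following holds. Let δ > 0, 0 < C < 1/2, and positive integers i, k, m satisfy 1 ≤ i ≤ k and k² ≤ C₀ C² m. Then β'_i := (δ/√m) · |Σ_{x=0}^m F'_{m,x}(0) · P_i((x − m/2)/(Cm))| ≤ c · max( (δ/C)·√(i/m), δ i^{3/2}/(C² m) ), where F'_{m,x}(0) = 4 · 2^{−m} binom(m,x) · (x − m/2). -/

import Mathlib

open Finset

/-- The `i`-th Legendre polynomial (as a function), via its explicit expansion
`P_i(x) = 2^{−i} Σ_{j=0}^{⌊i/2⌋} (−1)^j binom(i,j) binom(2i−2j, i) x^{i−2j}`. -/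
noncomputable def legendre (i : ℕ) (x : ℝ) : ℝ :=
  ((2 : ℝ) ^ i)⁻¹ * ∑ j ∈ Finset.range (i / 2 + 1),
    (-1 : ℝ) ^ j * (i.choose j : ℝ) * ((2 * i - 2 * j).choose i : ℝ) * x ^ (i - 2 * j)

open Nat


lemma fac_two_mul (r : ℕ) : (2*r)! = 2^r * r ! * (2*r-1)‼ := by
  cases r with
  | zero => rfl
  | succ n =>
    have h : 2*(n+1) = (2*n+1)+1 := by ring
    rw [h, Nat.factorial_eq_mul_doubleFactorial]
    have h2 : 2*n+1+1 = 2*(n+1) := by ring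
    rw [h2, Nat.doubleFactorial_two_mul]
    have h3 : 2*(n+1)-1 = 2*n+1 := by omega
    rw [h3]

lemma key_nat {r t : ℕ} (h : t ≤ r) :
    (2*r).choose (2*t) * (2*t-1)‼ ≤ r.choose t * (2*r-1)‼ := by
  have hK : 0 < 2^t * t ! * (2*(r-t))! := by positivity
  refine Nat.le_of_mul_le_mul_right ?_ hK
  have e1 : (2*r).choose (2*t) * (2*t-1)‼ * (2^t * t ! * (2*(r-t))!) = (2*r)! := by
    have : 2*(r-t) = 2*r - 2*t := by omega
    rw [this]
    calc (2*r).choose (2*t) * (2*t-1)‼ * (2^t * t ! * (2*r-2*t)!)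
        = (2*r).choose (2*t) * (2^t * t ! * (2*t-1)‼) * (2*r-2*t)! := by ring
      _ = (2*r).choose (2*t) * (2*t)! * (2*r-2*t)! := by rw [← fac_two_mul]
      _ = (2*r)! := Nat.choose_mul_factorial_mul_factorial (by omega)
  rw [e1]
  calc (2*r)! = 2^r * r ! * (2*r-1)‼ := fac_two_mul r
    _ = 2^r * (r.choose t * t ! * (r-t)!) * (2*r-1)‼ := by
        rw [Nat.choose_mul_factorial_mul_factorial h]
    _ = r.choose t * (2*r-1)‼ * (2^t * t ! * (2^(r-t) * (r-t)!)) := by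
        rw [show 2^r = 2^t * 2^(r-t) by rw [← pow_add]; congr 1; omega]; ring
    _ ≤ r.choose t * (2*r-1)‼ * (2^t * t ! * (2*(r-t))!) := by
        have : 2^(r-t) * (r-t)! ≤ (2*(r-t))! := by
          rw [fac_two_mul (r-t)]
          exact Nat.le_mul_of_pos_right _ (Nat.doubleFactorial_pos _)
        exact Nat.mul_le_mul_left _ (Nat.mul_le_mul_left _ this)


lemma cb_sq (n : ℕ) : (2*n+1) * (Nat.centralBinom n)^2 ≤ 16^n := by
  induction n with
  | zero => simp [Nat.centralBinom]
  | succ n ih =>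
    have h := Nat.succ_mul_centralBinom_succ n
    have h2 : ((n+1) * Nat.centralBinom (n+1))^2 = (2*(2*n+1))^2 * (Nat.centralBinom n)^2 := by
      rw [h]; ring
    have key : (2*(n+1)+1) * ((n+1) * Nat.centralBinom (n+1))^2 ≤ (n+1)^2 * 16^(n+1) := by
      rw [h2]
      calc (2*(n+1)+1) * ((2*(2*n+1))^2 * (Nat.centralBinom n)^2)
          = (2*n+3)*(2*n+1)*4 * ((2*n+1) * (Nat.centralBinom n)^2) := by ring
        _ ≤ (2*n+3)*(2*n+1)*4 * 16^n := Nat.mul_le_mul_left _ ih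
        _ ≤ (n+1)^2*16 * 16^n := by
            have : (2*n+3)*(2*n+1)*4 ≤ (n+1)^2*16 := by nlinarith
            exact Nat.mul_le_mul_right _ this
        _ = (n+1)^2 * 16^(n+1) := by ring
    have hpos : 0 < (n+1)^2 := by positivity
    calc (2*(n+1)+1) * (Nat.centralBinom (n+1))^2
        = ((2*(n+1)+1) * ((n+1) * Nat.centralBinom (n+1))^2) / (n+1)^2 := by
          rw [mul_pow]; rw [Nat.mul_div_assoc]
          · rw [Nat.mul_div_cancel_left _ hpos]
          · exact Dvd.intro _ rfl
      _ ≤ ((n+1)^2 * 16^(n+1)) / (n+1)^2 := Nat.div_le_div_right key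
      _ = 16^(n+1) := Nat.mul_div_cancel_left _ hpos

lemma cb_real (n : ℕ) : (Nat.centralBinom n : ℝ) ≤ 4^n / Real.sqrt (2*n+1) := by
  have hs : (0:ℝ) < Real.sqrt (2*n+1) := Real.sqrt_pos.2 (by positivity)
  rw [le_div_iff₀ hs]
  have h : ((Nat.centralBinom n : ℝ) * Real.sqrt (2*n+1))^2 ≤ ((4:ℝ)^n)^2 := by
    rw [mul_pow, Real.sq_sqrt (by positivity)]
    calc (Nat.centralBinom n : ℝ)^2 * (2*↑n+1)
        = ((2*n+1) * (Nat.centralBinom n)^2 : ℕ) := by push_cast; ring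
      _ ≤ ((16:ℕ)^n : ℝ) := by exact_mod_cast cb_sq n
      _ = ((4:ℝ)^n)^2 := by
          push_cast
          rw [show (16:ℝ) = 4^2 by norm_num, ← pow_mul, pow_mul']
  exact le_of_pow_le_pow_left₀ two_ne_zero (by positivity) h

lemma choose_odd_le (l j : ℕ) : ((2*l+1).choose j : ℝ) ≤ 2^(2*l+1) / Real.sqrt (2*l+3) := by
  have h1 : (2*l+1).choose j ≤ (2*l+1).choose l := by
    have := Nat.choose_le_middle j (2*l+1)
    simpa [show (2*l+1)/2 = l by omega] using this
  have h2 : 2 * (2*l+1).choose l = Nat.centralBinom (l+1) := by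
    have e1 : Nat.centralBinom (l+1) = (2*l+1+1).choose (l+1) := by
      rw [show Nat.centralBinom (l+1) = (2*(l+1)).choose (l+1) from rfl,
        show 2*(l+1) = 2*l+1+1 by ring]
    have e2 : (2*l+1+1).choose (l+1) = (2*l+1).choose l + (2*l+1).choose (l+1) :=
      Nat.choose_succ_succ _ _
    have e3 : (2*l+1).choose (l+1) = (2*l+1).choose l := by
      rw [← Nat.choose_symm (by omega : l+1 ≤ 2*l+1)]
      congr 1; omega
    omega
  have h4 := cb_real (l+1)
  push_cast at h4
  rw [show (2*((l:ℝ)+1)+1) = 2*(l:ℝ)+3 from by ring] at h4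
  have h2c : (2:ℝ) * ((2*l+1).choose l : ℝ) = (Nat.centralBinom (l+1) : ℝ) := by
    exact_mod_cast h2
  have h1c : ((2*l+1).choose j : ℝ) ≤ ((2*l+1).choose l : ℝ) := by exact_mod_cast h1
  have e4 : (4:ℝ)^(l+1) = 2 * 2^(2*l+1) := by
    rw [show (4:ℝ) = 2^2 by norm_num, ← pow_mul, show 2*(l+1) = (2*l+1)+1 by ring, pow_succ]
    ring
  have hs : (0:ℝ) < Real.sqrt (2*(l:ℝ)+3) := Real.sqrt_pos.2 (by positivity)
  calc ((2*l+1).choose j : ℝ) ≤ ((2*l+1).choose l : ℝ) := h1c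
    _ = (Nat.centralBinom (l+1) : ℝ) / 2 := by linarith
    _ ≤ (4^(l+1) / Real.sqrt (2*(l:ℝ)+3)) / 2 := by linarith
    _ = 2^(2*l+1) / Real.sqrt (2*(l:ℝ)+3) := by rw [e4]; ring


noncomputable def binSum (m p : ℕ) : ℝ :=
  ∑ x ∈ Finset.range (m+1), (m.choose x : ℝ) * ((x:ℝ) - (m:ℝ)/2)^p

lemma binSum_even_nonneg (m t : ℕ) : 0 ≤ binSum m (2*t) := by
  apply Finset.sum_nonneg
  intro x _
  have h : ((x:ℝ) - (m:ℝ)/2)^(2*t) = (((x:ℝ) - (m:ℝ)/2)^2)^t := by rw [← pow_mul]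
  rw [h]; positivity

lemma binSum_odd (m p : ℕ) (hp : Odd p) : binSum m p = 0 := by
  have h := Finset.sum_range_reflect
    (fun x => (m.choose x : ℝ) * ((x:ℝ) - (m:ℝ)/2)^p) (m+1)
  simp only [Nat.add_sub_cancel] at h
  have h2 : ∑ x ∈ Finset.range (m+1),
      (m.choose (m-x) : ℝ) * ((↑(m-x):ℝ) - (m:ℝ)/2)^p = - binSum m p := by
    unfold binSum
    rw [← Finset.sum_neg_distrib]
    apply Finset.sum_congr rfl
    intro x hx
    have hx' : x ≤ m := by simpa using Nat.lt_succ_iff.mp (Finset.mem_range.mp hx)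
    rw [Nat.choose_symm hx', Nat.cast_sub hx']
    rw [show ((m:ℝ) - (x:ℝ) - (m:ℝ)/2) = -((x:ℝ) - (m:ℝ)/2) by ring, hp.neg_pow]
    ring
  have e : binSum m p = ∑ x ∈ Finset.range (m+1),
      (m.choose x : ℝ) * ((x:ℝ) - (m:ℝ)/2)^p := rfl
  linarith [h, h2, e]

lemma binSum_rec (m p : ℕ) :
    binSum (m+1) p = ∑ s ∈ Finset.range (p+1),
      (p.choose s : ℝ) * ((2⁻¹:ℝ)^(p-s) + (-2⁻¹:ℝ)^(p-s)) * binSum m s := by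
  set c : ℕ → ℝ := fun x => ((x:ℝ) - ((m:ℝ)+1)/2)^p with hc
  have hA : ∀ d : ℕ → ℝ, ∑ x ∈ Finset.range (m+2), ((m+1).choose x : ℝ) * d x
      = (∑ x ∈ Finset.range (m+1), (m.choose x:ℝ) * d (x+1))
        + ∑ x ∈ Finset.range (m+2), (m.choose x:ℝ) * d x := by
    intro d
    rw [Finset.sum_range_succ' (fun x => ((m+1).choose x : ℝ) * d x) (m+1)]
    rw [Finset.sum_range_succ' (fun x => ((m).choose x : ℝ) * d x) (m+1)]
    simp only [Nat.choose_succ_succ, Nat.choose_zero_right, Nat.cast_add, Nat.cast_one,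
      Nat.succ_eq_add_one]
    have hsplit : ∑ x ∈ Finset.range (m+1), ((m.choose x : ℝ) + (m.choose (x+1) : ℝ)) * d (x+1)
        = (∑ x ∈ Finset.range (m+1), (m.choose x : ℝ) * d (x+1))
          + ∑ x ∈ Finset.range (m+1), (m.choose (x+1) : ℝ) * d (x+1) := by
      rw [← Finset.sum_add_distrib]
      apply Finset.sum_congr rfl
      intros; ring
    rw [hsplit]; ring
  have hB : ∑ x ∈ Finset.range (m+2), (m.choose x:ℝ) * c x
      = ∑ x ∈ Finset.range (m+1), (m.choose x:ℝ) * c x := by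
    rw [Finset.sum_range_succ]
    simp [Nat.choose_succ_self]
  have step1 : binSum (m+1) p
      = ∑ x ∈ Finset.range (m+1), (m.choose x : ℝ) * (c (x+1) + c x) := by
    unfold binSum
    push_cast
    rw [show m+1+1 = m+2 from rfl]
    have := hA c
    push_cast at this ⊢
    rw [this, hB, ← Finset.sum_add_distrib]
    apply Finset.sum_congr rfl
    intro x _
    simp only [hc]
    push_cast
    ring
  rw [step1]
  have step2 : ∀ x : ℕ, c (x+1) + c x
      = ∑ s ∈ Finset.range (p+1),
          ((x:ℝ) - (m:ℝ)/2)^s * ((2⁻¹:ℝ)^(p-s) + (-2⁻¹:ℝ)^(p-s)) * (p.choose s : ℝ) := by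
    intro x
    have e1 : c (x+1) = (((x:ℝ) - (m:ℝ)/2) + 2⁻¹)^p := by
      simp only [hc]; push_cast; ring_nf
    have e2 : c x = (((x:ℝ) - (m:ℝ)/2) + (-2⁻¹))^p := by
      simp only [hc]; push_cast; ring_nf
    rw [e1, e2, add_pow, add_pow, ← Finset.sum_add_distrib]
    apply Finset.sum_congr rfl
    intro s _
    ring
  calc ∑ x ∈ Finset.range (m+1), (m.choose x : ℝ) * (c (x+1) + c x)
      = ∑ x ∈ Finset.range (m+1), ∑ s ∈ Finset.range (p+1),
          (p.choose s : ℝ) * ((2⁻¹:ℝ)^(p-s) + (-2⁻¹:ℝ)^(p-s))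
            * ((m.choose x : ℝ) * ((x:ℝ) - (m:ℝ)/2)^s) := by
        apply Finset.sum_congr rfl
        intro x _
        rw [step2 x, Finset.mul_sum]
        apply Finset.sum_congr rfl
        intro s _
        ring
    _ = ∑ s ∈ Finset.range (p+1),
          (p.choose s : ℝ) * ((2⁻¹:ℝ)^(p-s) + (-2⁻¹:ℝ)^(p-s)) * binSum m s := by
        rw [Finset.sum_comm]
        apply Finset.sum_congr rfl
        intro s _
        rw [binSum, Finset.mul_sum]

lemma sum_even_kill (n : ℕ) (g : ℕ → ℝ) (h : ∀ s, Odd s → g s = 0) :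
    ∑ s ∈ Finset.range (2*n+1), g s = ∑ t ∈ Finset.range (n+1), g (2*t) := by
  induction n with
  | zero => simp
  | succ n ih =>
    rw [show 2*(n+1)+1 = (2*n+1)+1+1 by ring, Finset.sum_range_succ, Finset.sum_range_succ,
      ih, h (2*n+1) ⟨n, by ring⟩, Finset.sum_range_succ (fun t => g (2*t)) (n+1)]
    rw [show 2*n+1+1 = 2*(n+1) by ring]
    ring

lemma moment_bound : ∀ m r : ℕ, binSum m (2*r) ≤ 2^m * ((2*r-1)‼ : ℝ) * ((m:ℝ)/4)^r := by
  intro m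
  induction m with
  | zero =>
    intro r
    rcases Nat.eq_zero_or_pos r with hr | hr
    · subst hr; simp [binSum]
    · have h0 : binSum 0 (2*r) = 0 := by
        simp [binSum, zero_pow (by omega : 2*r ≠ 0)]
      rw [h0]
      have : ((0:ℕ):ℝ)/4 = 0 := by norm_num
      rw [this, zero_pow (by omega : r ≠ 0)]
      simp
  | succ m ih =>
    intro r
    rw [binSum_rec]
    have hodd : ∀ s, Odd s → (((2*r).choose s : ℝ) * ((2⁻¹:ℝ)^(2*r-s) + (-2⁻¹:ℝ)^(2*r-s)) * binSum m s) = 0 := by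
      intro s hs
      rcases le_or_gt s (2*r) with hsle | hgt
      · have : Odd (2*r - s) := by
          rcases hs with ⟨a, ha⟩
          exact ⟨r - a - 1, by omega⟩
        rw [this.neg_pow]
        ring_nf
      · rw [Nat.choose_eq_zero_of_lt hgt]; simp
    rw [sum_even_kill r _ hodd]
    have hterm : ∀ t ∈ Finset.range (r+1),
        ((2*r).choose (2*t) : ℝ) * ((2⁻¹:ℝ)^(2*r-2*t) + (-2⁻¹:ℝ)^(2*r-2*t)) * binSum m (2*t)
        ≤ (2^(m+1) * ((2*r-1)‼ : ℝ) * ((4:ℝ)⁻¹)^r) * ((r.choose t : ℝ) * (m:ℝ)^t) := by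
      intro t ht
      have htr : t ≤ r := by
        have := Finset.mem_range.mp ht; omega
      have hu : 2*r - 2*t = 2*(r-t) := by omega
      rw [hu]
      have hcoe : (2⁻¹:ℝ)^(2*(r-t)) + (-2⁻¹:ℝ)^(2*(r-t)) = 2 * ((4:ℝ)⁻¹)^(r-t) := by
        rw [Even.neg_pow (even_two_mul _), ← two_mul]
        congr 1
        rw [pow_mul]; norm_num
      rw [hcoe]
      have h4 : ((4:ℝ)⁻¹)^(r-t) * ((m:ℝ)/4)^t = ((4:ℝ)⁻¹)^r * (m:ℝ)^t := by
        calc ((4:ℝ)⁻¹)^(r-t) * ((m:ℝ)/4)^t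
            = ((4:ℝ)⁻¹)^(r-t) * ((4:ℝ)⁻¹)^t * (m:ℝ)^t := by
              rw [div_eq_mul_inv, mul_pow]; ring
          _ = ((4:ℝ)⁻¹)^((r-t)+t) * (m:ℝ)^t := by rw [pow_add]
          _ = ((4:ℝ)⁻¹)^r * (m:ℝ)^t := by rw [show (r-t)+t = r from by omega]
      have hkey : ((2*r).choose (2*t) : ℝ) * ((2*t-1)‼ : ℝ) ≤ (r.choose t : ℝ) * ((2*r-1)‼ : ℝ) := by
        exact_mod_cast key_nat htr
      have hnn1 : (0:ℝ) ≤ ((2*r).choose (2*t) : ℝ) * (2 * ((4:ℝ)⁻¹)^(r-t)) := by positivity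
      calc ((2*r).choose (2*t) : ℝ) * (2 * ((4:ℝ)⁻¹)^(r-t)) * binSum m (2*t)
          ≤ ((2*r).choose (2*t) : ℝ) * (2 * ((4:ℝ)⁻¹)^(r-t))
              * (2^m * ((2*t-1)‼ : ℝ) * ((m:ℝ)/4)^t) :=
            mul_le_mul_of_nonneg_left (ih t) hnn1
        _ = (((2*r).choose (2*t) : ℝ) * ((2*t-1)‼ : ℝ))
              * (2 * ((4:ℝ)⁻¹)^(r-t) * 2^m * ((m:ℝ)/4)^t) := by ring
        _ ≤ ((r.choose t : ℝ) * ((2*r-1)‼ : ℝ))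
              * (2 * ((4:ℝ)⁻¹)^(r-t) * 2^m * ((m:ℝ)/4)^t) := by
            apply mul_le_mul_of_nonneg_right hkey
            positivity
        _ = (2^(m+1) * ((2*r-1)‼ : ℝ) * ((4:ℝ)⁻¹)^r) * ((r.choose t : ℝ) * (m:ℝ)^t) := by
            rw [pow_succ]
            calc (r.choose t : ℝ) * ((2*r-1)‼:ℝ) * (2 * ((4:ℝ)⁻¹)^(r-t) * 2^m * ((m:ℝ)/4)^t)
                = ((4:ℝ)⁻¹)^(r-t) * ((m:ℝ)/4)^t
                    * ((r.choose t : ℝ) * ((2*r-1)‼:ℝ) * 2 * 2^m) := by ring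
              _ = ((4:ℝ)⁻¹)^r * (m:ℝ)^t * ((r.choose t : ℝ) * ((2*r-1)‼:ℝ) * 2 * 2^m) := by
                  rw [h4]
              _ = 2^m * 2 * ((2*r-1)‼:ℝ) * ((4:ℝ)⁻¹)^r * ((r.choose t : ℝ) * (m:ℝ)^t) := by ring
    calc ∑ t ∈ Finset.range (r+1),
          ((2*r).choose (2*t) : ℝ) * ((2⁻¹:ℝ)^(2*r-2*t) + (-2⁻¹:ℝ)^(2*r-2*t)) * binSum m (2*t)
        ≤ ∑ t ∈ Finset.range (r+1),
            (2^(m+1) * ((2*r-1)‼ : ℝ) * ((4:ℝ)⁻¹)^r) * ((r.choose t : ℝ) * (m:ℝ)^t) :=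
          Finset.sum_le_sum hterm
      _ = (2^(m+1) * ((2*r-1)‼ : ℝ) * ((4:ℝ)⁻¹)^r)
            * ∑ t ∈ Finset.range (r+1), (r.choose t : ℝ) * (m:ℝ)^t := by
          rw [Finset.mul_sum]
      _ = 2^(m+1) * ((2*r-1)‼ : ℝ) * ((↑(m+1):ℝ)/4)^r := by
          have hbin : ∑ t ∈ Finset.range (r+1), (r.choose t : ℝ) * (m:ℝ)^t = ((m:ℝ)+1)^r := by
            have h := add_pow (m:ℝ) 1 r
            simp only [one_pow, mul_one] at h
            rw [h]
            apply Finset.sum_congr rfl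
            intros; ring
          rw [hbin]
          push_cast
          rw [show ((m:ℝ)+1)/4 = ((m:ℝ)+1) * 4⁻¹ by ring, mul_pow]
          ring

lemma swap_sum (C : ℝ) (i m : ℕ) :
    ∑ x ∈ Finset.range (m+1),
      (4 * ((2:ℝ)^m)⁻¹ * (m.choose x : ℝ) * ((x:ℝ) - (m:ℝ)/2)) *
        legendre i (((x:ℝ) - (m:ℝ)/2) / (C*(m:ℝ)))
    = ∑ j ∈ Finset.range (i/2+1),
        ((2:ℝ)^i)⁻¹ * ((-1:ℝ)^j * (i.choose j : ℝ) * ((2*i-2*j).choose i : ℝ))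
          * (4 * ((2:ℝ)^m)⁻¹ * (((C*(m:ℝ))^(i-2*j))⁻¹) * binSum m (i-2*j+1)) := by
  calc ∑ x ∈ Finset.range (m+1),
      (4 * ((2:ℝ)^m)⁻¹ * (m.choose x : ℝ) * ((x:ℝ) - (m:ℝ)/2)) *
        legendre i (((x:ℝ) - (m:ℝ)/2) / (C*(m:ℝ)))
      = ∑ x ∈ Finset.range (m+1), ∑ j ∈ Finset.range (i/2+1),
          ((2:ℝ)^i)⁻¹ * ((-1:ℝ)^j * (i.choose j : ℝ) * ((2*i-2*j).choose i : ℝ))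
            * (4 * ((2:ℝ)^m)⁻¹ * (((C*(m:ℝ))^(i-2*j))⁻¹)
                * ((m.choose x : ℝ) * ((x:ℝ) - (m:ℝ)/2)^(i-2*j+1))) := by
        apply Finset.sum_congr rfl
        intro x _
        rw [legendre, Finset.mul_sum, Finset.mul_sum]
        apply Finset.sum_congr rfl
        intro j _
        rw [div_pow, pow_succ ((x:ℝ) - (m:ℝ)/2) (i-2*j)]
        ring
    _ = _ := by
        rw [Finset.sum_comm]
        apply Finset.sum_congr rfl
        intro j _
        rw [binSum, Finset.mul_sum, Finset.mul_sum]


lemma dfac_le (u : ℕ) : ((2*u+1)‼ : ℝ) ≤ 2 * ((2:ℝ)⁻¹)^(u+1) * ((2*u+1)! : ℝ) := by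
  have h := fac_two_mul (u+1)
  have e : (2*(u+1))! = (2*u+2) * (2*u+1)! := by
    rw [show 2*(u+1) = (2*u+1)+1 by ring, Nat.factorial_succ]
  have e2 : 2^(u+1) * (u+1)! * (2*(u+1)-1)‼ = (2*u+2) * (2^u * u ! * (2*u+1)‼) := by
    rw [show 2*(u+1)-1 = 2*u+1 by omega, Nat.factorial_succ, pow_succ]
    ring
  have hnat : (2*u+1)! = 2^u * u ! * (2*u+1)‼ :=
    Nat.eq_of_mul_eq_mul_left (show 0 < 2*u+2 by omega) (by rw [← e, h, e2])
  have hn2 : 2^u * (2*u+1)‼ ≤ (2*u+1)! := by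
    rw [hnat]
    calc 2^u * (2*u+1)‼ ≤ 2^u * u ! * (2*u+1)‼ := by
          apply Nat.mul_le_mul_right
          exact Nat.le_mul_of_pos_right _ u.factorial_pos
      _ = 2^u * u ! * (2*u+1)‼ := rfl
  have hr : (2:ℝ)^u * ((2*u+1)‼ : ℝ) ≤ ((2*u+1)! : ℝ) := by exact_mod_cast hn2
  have h2u : (0:ℝ) < (2:ℝ)^u := by positivity
  rw [show (2:ℝ) * ((2:ℝ)⁻¹)^(u+1) * ((2*u+1)! : ℝ) = ((2*u+1)! : ℝ) / 2^u by
    rw [pow_succ, inv_pow]; ring]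
  rw [le_div_iff₀ h2u]
  linarith



lemma geo_le_one (l : ℕ) : ∑ j ∈ Finset.range (l+1), ((2:ℝ)⁻¹)^(l-j+1) ≤ 1 := by
  have hre := Finset.sum_range_reflect (fun j => ((2:ℝ)⁻¹)^(j+1)) (l+1)
  simp only [Nat.add_sub_cancel] at hre
  rw [hre]
  calc ∑ j ∈ Finset.range (l+1), ((2:ℝ)⁻¹)^(j+1)
      = ∑ j ∈ Finset.range (l+1), (((2:ℝ)⁻¹)^j - ((2:ℝ)⁻¹)^(j+1)) := by
        apply Finset.sum_congr rfl
        intro j _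
        rw [pow_succ]; ring
    _ = ((2:ℝ)⁻¹)^0 - ((2:ℝ)⁻¹)^(l+1) := Finset.sum_range_sub' (fun j => ((2:ℝ)⁻¹)^j) (l+1)
    _ ≤ 1 := by
        have : (0:ℝ) ≤ ((2:ℝ)⁻¹)^(l+1) := by positivity
        simp only [pow_zero]
        linarith

lemma perj (C : ℝ) (hC : 0 < C) (l j m : ℕ) (hj : j ≤ l) (hm : (0:ℝ) < (m:ℝ))
    (hi2 : (2*(l:ℝ)+1)^2 ≤ C^2 * (m:ℝ)) :
    |((2:ℝ)^(2*l+1))⁻¹ * ((-1:ℝ)^j * ((2*l+1).choose j : ℝ)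
        * ((2*(2*l+1)-2*j).choose (2*l+1) : ℝ))
      * (4 * ((2:ℝ)^m)⁻¹ * (((C*(m:ℝ))^((2*l+1)-2*j))⁻¹) * binSum m ((2*l+1)-2*j+1))|
    ≤ 4 * (Real.sqrt (2*(l:ℝ)+1) / C) * ((2:ℝ)⁻¹)^(l-j+1) := by
  set u := l - j with hu
  have hn : (2*l+1) - 2*j = 2*u+1 := by omega
  have hn1 : (2*l+1) - 2*j + 1 = 2*(u+1) := by omega
  rw [hn1, hn]
  have hBnn := binSum_even_nonneg m (u+1)
  have hrest : (0:ℝ) ≤ 4 * ((2:ℝ)^m)⁻¹ * (((C*(m:ℝ))^(2*u+1))⁻¹) * binSum m (2*(u+1)) := by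
    positivity
  rw [abs_mul, abs_mul, abs_mul, abs_mul, abs_pow, abs_neg, abs_one, one_pow, one_mul,
    abs_of_nonneg (by positivity : (0:ℝ) ≤ ((2:ℝ)^(2*l+1))⁻¹),
    Nat.abs_cast, Nat.abs_cast, abs_of_nonneg hrest]
  -- abbreviations
  have hs3 : (0:ℝ) < Real.sqrt (2*(l:ℝ)+3) := Real.sqrt_pos.2 (by positivity)
  have hF : (0:ℝ) < ((2*u+1)! : ℝ) := by exact_mod_cast (2*u+1).factorial_pos
  have hP : (0:ℝ) < (C*(m:ℝ))^(2*u+1) := by positivity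
  -- piece bounds
  have hc1 : ((2*l+1).choose j : ℝ) ≤ 2^(2*l+1) / Real.sqrt (2*(l:ℝ)+3) :=
    choose_odd_le l j
  have hc2 : ((2*(2*l+1)-2*j).choose (2*l+1) : ℝ)
      ≤ (2*(2*(l:ℝ)+1))^(2*u+1) / ((2*u+1)! : ℝ) := by
    have hsymm : (2*(2*l+1)-2*j).choose (2*l+1) = (2*(2*l+1)-2*j).choose (2*u+1) := by
      rw [← Nat.choose_symm (show (2*l+1) ≤ 2*(2*l+1)-2*j by omega)]
      congr 1
      omega
    rw [hsymm]
    calc ((2*(2*l+1)-2*j).choose (2*u+1) : ℝ)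
        ≤ ((2*(2*l+1)-2*j : ℕ):ℝ)^(2*u+1) / ((2*u+1)! : ℝ) := Nat.choose_le_pow_div _ _
      _ ≤ (2*(2*(l:ℝ)+1))^(2*u+1) / ((2*u+1)! : ℝ) := by
          have hle : ((2*(2*l+1)-2*j : ℕ):ℝ) ≤ 2*(2*(l:ℝ)+1) := by
            calc ((2*(2*l+1)-2*j : ℕ):ℝ) ≤ ((2*(2*l+1) : ℕ):ℝ) := by
                  exact_mod_cast Nat.sub_le _ _
              _ = 2*(2*(l:ℝ)+1) := by push_cast; ring
          gcongr
  have hB : binSum m (2*(u+1)) ≤ 2^m * ((2*u+1)‼ : ℝ) * ((m:ℝ)/4)^(u+1) := by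
    have := moment_bound m (u+1)
    rwa [show 2*(u+1)-1 = 2*u+1 by omega] at this
  -- core power inequality
  have pow21 : ∀ a : ℝ, a^(2*u+1) = (a^2)^u * a := by
    intro a
    rw [pow_succ, pow_mul]
  have hpowle : (((2*(l:ℝ)+1))^2)^u ≤ (C^2*(m:ℝ))^u := by
    apply pow_le_pow_left₀ (by positivity) hi2
  have core : (2*(2*(l:ℝ)+1))^(2*u+1) * ((m:ℝ)/4)^(u+1)
      ≤ (2*(l:ℝ)+1)/(2*C) * (C*(m:ℝ))^(2*u+1) := by
    have e1 : (2*(2*(l:ℝ)+1))^(2*u+1) * ((m:ℝ)/4)^(u+1)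
        = ((2*(l:ℝ)+1)^2)^u * ((m:ℝ))^u * ((1/2) * (2*(l:ℝ)+1) * (m:ℝ)) := by
      rw [pow21 (2*(2*(l:ℝ)+1)), pow_succ ((m:ℝ)/4) u, div_pow,
        show (2*(2*(l:ℝ)+1))^2 = 4 * (2*(l:ℝ)+1)^2 by ring,
        mul_pow (4:ℝ) ((2*(l:ℝ)+1)^2) u]
      have h4 : ((4:ℝ))^u ≠ 0 := by positivity
      field_simp
      ring
    have e2 : (2*(l:ℝ)+1)/(2*C) * (C*(m:ℝ))^(2*u+1)
        = (C^2*(m:ℝ))^u * ((m:ℝ))^u * ((1/2) * (2*(l:ℝ)+1) * (m:ℝ)) := by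
      rw [pow21 (C*(m:ℝ)), show (C*(m:ℝ))^2 = (C^2*(m:ℝ))*(m:ℝ) by ring,
        mul_pow (C^2*(m:ℝ)) ((m:ℝ)) u]
      field_simp
    rw [e1, e2]
    have hnn : (0:ℝ) ≤ ((m:ℝ))^u * ((1/2) * (2*(l:ℝ)+1) * (m:ℝ)) := by positivity
    calc ((2*(l:ℝ)+1)^2)^u * ((m:ℝ))^u * ((1/2) * (2*(l:ℝ)+1) * (m:ℝ))
        = ((2*(l:ℝ)+1)^2)^u * (((m:ℝ))^u * ((1/2) * (2*(l:ℝ)+1) * (m:ℝ))) := by ring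
      _ ≤ (C^2*(m:ℝ))^u * (((m:ℝ))^u * ((1/2) * (2*(l:ℝ)+1) * (m:ℝ))) :=
          mul_le_mul_of_nonneg_right hpowle hnn
      _ = (C^2*(m:ℝ))^u * ((m:ℝ))^u * ((1/2) * (2*(l:ℝ)+1) * (m:ℝ)) := by ring
  -- the big chain
  have hdf : ((2*u+1)‼ : ℝ) ≤ 2 * ((2:ℝ)⁻¹)^(u+1) * ((2*u+1)! : ℝ) := dfac_le u
  calc ((2:ℝ)^(2*l+1))⁻¹ * (((2*l+1).choose j : ℝ) * ((2*(2*l+1)-2*j).choose (2*l+1) : ℝ))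
        * (4 * ((2:ℝ)^m)⁻¹ * (((C*(m:ℝ))^(2*u+1))⁻¹) * binSum m (2*(u+1)))
      ≤ ((2:ℝ)^(2*l+1))⁻¹
          * ((2^(2*l+1) / Real.sqrt (2*(l:ℝ)+3)) * ((2*(2*(l:ℝ)+1))^(2*u+1) / ((2*u+1)! : ℝ)))
          * (4 * ((2:ℝ)^m)⁻¹ * (((C*(m:ℝ))^(2*u+1))⁻¹)
              * (2^m * ((2*u+1)‼ : ℝ) * ((m:ℝ)/4)^(u+1))) := by
        apply mul_le_mul
        · apply mul_le_mul_of_nonneg_left (mul_le_mul hc1 hc2 (by positivity) (by positivity))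
          positivity
        · apply mul_le_mul_of_nonneg_left hB
          positivity
        · exact hrest
        · positivity
    _ = (1 / Real.sqrt (2*(l:ℝ)+3)) * (((2*u+1)‼ : ℝ) / ((2*u+1)! : ℝ))
          * (4 * ((2*(2*(l:ℝ)+1))^(2*u+1) * ((m:ℝ)/4)^(u+1)) * (((C*(m:ℝ))^(2*u+1))⁻¹)) := by
        have h2l : ((2:ℝ)^(2*l+1)) ≠ 0 := by positivity
        have h2m : ((2:ℝ)^m) ≠ 0 := by positivity
        field_simp
    _ ≤ (1 / Real.sqrt (2*(l:ℝ)+3)) * (2 * ((2:ℝ)⁻¹)^(u+1))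
          * (4 * ((2*(2*(l:ℝ)+1))^(2*u+1) * ((m:ℝ)/4)^(u+1)) * (((C*(m:ℝ))^(2*u+1))⁻¹)) := by
        apply mul_le_mul_of_nonneg_right
        · apply mul_le_mul_of_nonneg_left _ (by positivity)
          rw [div_le_iff₀ hF]
          linarith [hdf]
        · positivity
    _ ≤ (1 / Real.sqrt (2*(l:ℝ)+3)) * (2 * ((2:ℝ)⁻¹)^(u+1))
          * (4 * ((2*(l:ℝ)+1)/(2*C) * (C*(m:ℝ))^(2*u+1)) * (((C*(m:ℝ))^(2*u+1))⁻¹)) := by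
        apply mul_le_mul_of_nonneg_left _ (by positivity)
        apply mul_le_mul_of_nonneg_right _ (by positivity)
        apply mul_le_mul_of_nonneg_left core (by norm_num)
    _ = 4 * (((2*(l:ℝ)+1) / Real.sqrt (2*(l:ℝ)+3)) / C) * ((2:ℝ)⁻¹)^(u+1) := by
        have hPne : ((C*(m:ℝ))^(2*u+1)) ≠ 0 := ne_of_gt hP
        field_simp
    _ ≤ 4 * (Real.sqrt (2*(l:ℝ)+1) / C) * ((2:ℝ)⁻¹)^(u+1) := by
        have hkey : (2*(l:ℝ)+1) / Real.sqrt (2*(l:ℝ)+3) ≤ Real.sqrt (2*(l:ℝ)+1) := by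
          rw [div_le_iff₀ hs3]
          calc 2*(l:ℝ)+1 = Real.sqrt ((2*(l:ℝ)+1)^2) := (Real.sqrt_sq (by positivity)).symm
            _ ≤ Real.sqrt ((2*(l:ℝ)+1)*(2*(l:ℝ)+3)) := Real.sqrt_le_sqrt (by nlinarith)
            _ = Real.sqrt (2*(l:ℝ)+1) * Real.sqrt (2*(l:ℝ)+3) :=
                Real.sqrt_mul (by positivity) _
        gcongr

/-- Bound on the first-order term `β'_i` in the binomial moment-matching analysis,
where `F'_{m,x}(0) = 4 · 2^{−m} binom(m,x) (x − m/2)`. -/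
theorem binomial_first_order_bound :
    ∃ C₀ c : ℝ, 0 < C₀ ∧ 0 < c ∧
    ∀ (δ C : ℝ) (i k m : ℕ),
      0 < δ → 0 < C → C < 1 / 2 → 1 ≤ i → i ≤ k → 0 < m →
      (k : ℝ) ^ 2 ≤ C₀ * C ^ 2 * m →
      (δ / Real.sqrt m) *
        |∑ x ∈ Finset.range (m + 1),
          (4 * ((2 : ℝ) ^ m)⁻¹ * (m.choose x : ℝ) * ((x : ℝ) - (m : ℝ) / 2)) *
            legendre i (((x : ℝ) - (m : ℝ) / 2) / (C * m))| ≤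
      c * max ((δ / C) * Real.sqrt ((i : ℝ) / m))
        (δ * (i : ℝ) ^ ((3 : ℝ) / 2) / (C ^ 2 * m)) := by
  refine ⟨1, 4, one_pos, by norm_num, ?_⟩
  intro δ C i k m hδ hC hC12 hi1 hik hm hk
  have hm' : (0:ℝ) < (m:ℝ) := by exact_mod_cast hm
  have hi2 : ((i:ℕ):ℝ)^2 ≤ C^2 * (m:ℝ) := by
    have h1 : ((i:ℝ)) ≤ (k:ℝ) := by exact_mod_cast hik
    have h2 : ((i:ℝ))^2 ≤ (k:ℝ)^2 := by
      apply pow_le_pow_left₀ (by positivity) h1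
    nlinarith [hk]
  have hmaxnn : (0:ℝ) ≤ (δ/C) * Real.sqrt ((i:ℝ)/(m:ℝ)) := by positivity
  rw [swap_sum]
  rcases Nat.even_or_odd i with he | ho
  · -- even case: everything vanishes
    obtain ⟨e, hee⟩ := he
    have hz : ∀ j ∈ Finset.range (i/2+1),
        ((2:ℝ)^i)⁻¹ * ((-1:ℝ)^j * (i.choose j : ℝ) * ((2*i-2*j).choose i : ℝ))
          * (4 * ((2:ℝ)^m)⁻¹ * (((C*(m:ℝ))^(i-2*j))⁻¹) * binSum m (i-2*j+1)) = 0 := by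
      intro j hjr
      have hj : j ≤ i/2 := by
        have := Finset.mem_range.mp hjr; omega
      have hodd : Odd (i-2*j+1) := by
        refine ⟨e - j, by omega⟩
      rw [binSum_odd m _ hodd]
      ring
    rw [Finset.sum_eq_zero hz]
    simp only [abs_zero, mul_zero]
    calc (0:ℝ) ≤ 4 * ((δ/C) * Real.sqrt ((i:ℝ)/(m:ℝ))) := by positivity
      _ ≤ 4 * max ((δ/C) * Real.sqrt ((i:ℝ)/(m:ℝ)))
            (δ * (i:ℝ)^((3:ℝ)/2) / (C^2*(m:ℝ))) := by
          apply mul_le_mul_of_nonneg_left (le_max_left _ _) (by norm_num)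
  · obtain ⟨l, hl⟩ := ho
    subst hl
    rw [show (2*l+1)/2 = l by omega]
    have hi2' : (2*(l:ℝ)+1)^2 ≤ C^2 * (m:ℝ) := by
      calc (2*(l:ℝ)+1)^2 = (((2*l+1 : ℕ)):ℝ)^2 := by push_cast; ring
        _ ≤ C^2 * (m:ℝ) := hi2
    have hT : |∑ j ∈ Finset.range (l+1),
        ((2:ℝ)^(2*l+1))⁻¹ * ((-1:ℝ)^j * ((2*l+1).choose j : ℝ)
            * ((2*(2*l+1)-2*j).choose (2*l+1) : ℝ))
          * (4 * ((2:ℝ)^m)⁻¹ * (((C*(m:ℝ))^((2*l+1)-2*j))⁻¹) * binSum m ((2*l+1)-2*j+1))|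
        ≤ 4 * (Real.sqrt (2*(l:ℝ)+1) / C) := by
      calc |∑ j ∈ Finset.range (l+1), _| ≤ ∑ j ∈ Finset.range (l+1),
            |((2:ℝ)^(2*l+1))⁻¹ * ((-1:ℝ)^j * ((2*l+1).choose j : ℝ)
                * ((2*(2*l+1)-2*j).choose (2*l+1) : ℝ))
              * (4 * ((2:ℝ)^m)⁻¹ * (((C*(m:ℝ))^((2*l+1)-2*j))⁻¹)
                  * binSum m ((2*l+1)-2*j+1))| := Finset.abs_sum_le_sum_abs _ _
        _ ≤ ∑ j ∈ Finset.range (l+1),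
              4 * (Real.sqrt (2*(l:ℝ)+1) / C) * ((2:ℝ)⁻¹)^(l-j+1) := by
            apply Finset.sum_le_sum
            intro j hjr
            exact perj C hC l j m (by have := Finset.mem_range.mp hjr; omega) hm' hi2'
        _ = 4 * (Real.sqrt (2*(l:ℝ)+1) / C)
              * ∑ j ∈ Finset.range (l+1), ((2:ℝ)⁻¹)^(l-j+1) := by
            rw [Finset.mul_sum]
        _ ≤ 4 * (Real.sqrt (2*(l:ℝ)+1) / C) * 1 := by
            apply mul_le_mul_of_nonneg_left (geo_le_one l) (by positivity)
        _ = 4 * (Real.sqrt (2*(l:ℝ)+1) / C) := by ring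
    have hcast : ((2*l+1 : ℕ):ℝ) = 2*(l:ℝ)+1 := by push_cast; ring
    calc (δ / Real.sqrt (m:ℝ)) * |∑ j ∈ Finset.range (l+1),
          ((2:ℝ)^(2*l+1))⁻¹ * ((-1:ℝ)^j * ((2*l+1).choose j : ℝ)
              * ((2*(2*l+1)-2*j).choose (2*l+1) : ℝ))
            * (4 * ((2:ℝ)^m)⁻¹ * (((C*(m:ℝ))^((2*l+1)-2*j))⁻¹) * binSum m ((2*l+1)-2*j+1))|
        ≤ (δ / Real.sqrt (m:ℝ)) * (4 * (Real.sqrt (2*(l:ℝ)+1) / C)) := by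
          apply mul_le_mul_of_nonneg_left hT (by positivity)
      _ = 4 * ((δ/C) * (Real.sqrt (2*(l:ℝ)+1) / Real.sqrt (m:ℝ))) := by ring
      _ = 4 * ((δ/C) * Real.sqrt (((2*l+1 : ℕ):ℝ)/(m:ℝ))) := by
          rw [Real.sqrt_div (by positivity) (m:ℝ), hcast]
      _ ≤ 4 * max ((δ/C) * Real.sqrt (((2*l+1:ℕ):ℝ)/(m:ℝ)))
            (δ * (((2*l+1:ℕ):ℝ))^((3:ℝ)/2) / (C^2*(m:ℝ))) := by
          apply mul_le_mul_of_nonneg_left (le_max_left _ _) (by norm_num)
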